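/- With H = (1/N²)(N(M_N − 1_N) + 1_N) and N = 2n+1, the matrix identity HᵀH + HH + H = (n/N²)(2M_N − 1_N) holds; consequently for every x ∈ ℝ^N, xᵀ(HᵀH + HH + H)x = −(n/N²)||x||². -/

import Mathlib

open Matrix

/-- The skew-symmetric circulant payoff matrix of the complete odd circulant game:
first row `(0, -1, 1, -1, 1, …, -1, 1)`, each row a cyclic shift of the previous. -/
noncomputable def Lmat (N : ℕ) : Matrix (Fin N) (Fin N) ℝ :=
  Matrix.of fun i j => if i = j then 0 else (-1 : ℝ) ^ ((j.val + N - i.val) % N)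

/-- The 0-1 circulant tournament matrix: first row has ones exactly at positions
`3, 5, …, N` (1-indexed), i.e. at even nonzero cyclic offsets. -/
noncomputable def Mmat (N : ℕ) : Matrix (Fin N) (Fin N) ℝ :=
  Matrix.of fun i j =>
    if i ≠ j ∧ Even ((j.val + N - i.val) % N) then (1 : ℝ) else 0

/-- The `N × N` all-ones matrix. -/
noncomputable def onesMat (N : ℕ) : Matrix (Fin N) (Fin N) ℝ := Matrix.of fun _ _ => (1 : ℝ)

/-- `H = (1/N²)(N(M_N − 1_N) + 1_N)`, the Jacobian of the controlled part of the
replicator dynamics at the interior equilibrium. -/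
noncomputable def Hmat (N : ℕ) : Matrix (Fin N) (Fin N) ℝ :=
  ((1 : ℝ) / (N : ℝ) ^ 2) • ((N : ℝ) • (Mmat N - onesMat N) + onesMat N)

lemma range_count_aux (n : ℕ) :
    ∑ v ∈ Finset.range (2 * n + 1), (if v ≠ 0 ∧ Even v then (1:ℝ) else 0) = n := by
  induction n with
  | zero => simp [Finset.filter_eq_empty_iff]
  | succ m ih =>
    have h : 2 * (m+1) + 1 = (2*m+1) + 1 + 1 := by ring
    rw [h, Finset.sum_range_succ, Finset.sum_range_succ, ih]
    have h1 : ¬ Even (2*m+1) := by simp [Nat.even_add_one, Nat.even_mul]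
    have h2 : Even (2*m+1+1) := ⟨m+1, by ring⟩
    simp [h1, h2]

lemma Mmat_colsum (n : ℕ) (j : Fin (2*n+1)) :
    ∑ k, Mmat (2*n+1) k j = (n : ℝ) := by
  have key : ∀ k : Fin (2*n+1), Mmat (2*n+1) k j
      = (if (j - k : Fin (2*n+1)).val ≠ 0 ∧ Even ((j - k : Fin (2*n+1)).val) then (1:ℝ) else 0) := by
    intro k
    have hk := k.isLt
    have hsub : (j - k).val = (j.val + (2*n+1) - k.val) % (2*n+1) := by
      rw [Fin.sub_def]
      show (2*n+1 - k.val + j.val) % (2*n+1) = _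
      congr 1
      omega
    have hne : (k ≠ j) ↔ (j - k).val ≠ 0 := by
      rw [← Fin.val_ne_iff]
      constructor
      · intro h h0
        have h1 : j - k = 0 := Fin.ext h0
        have h2 : j = k := sub_eq_zero.mp h1
        exact h (congrArg Fin.val h2.symm)
      · intro h h0
        apply h
        have : j - k = 0 := by rw [sub_eq_zero]; exact Fin.ext h0.symm
        rw [this]; rfl
    simp only [Mmat, Matrix.of_apply, hsub, hne]
  rw [Finset.sum_congr rfl (fun k _ => key k)]
  rw [Fintype.sum_equiv (Equiv.subLeft j)
      (fun k => if (j - k : Fin (2*n+1)).val ≠ 0 ∧ Even ((j - k : Fin (2*n+1)).val) then (1:ℝ) else 0)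
      (fun d => if d.val ≠ 0 ∧ Even d.val then (1:ℝ) else 0) (fun k => rfl)]
  rw [Fin.sum_univ_eq_sum_range (fun v => if v ≠ 0 ∧ Even v then (1:ℝ) else 0)]
  exact range_count_aux n

lemma Mmat_transpose (n : ℕ) :
    (Mmat (2*n+1))ᵀ = onesMat (2*n+1) - 1 - Mmat (2*n+1) := by
  ext i j
  simp only [transpose_apply, Mmat, onesMat, Matrix.of_apply, Matrix.sub_apply, Matrix.one_apply]
  by_cases h : i = j
  · subst h; simp
  · have hij : i.val ≠ j.val := fun e => h (Fin.ext e)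
    have hi := i.isLt; have hj := j.isLt
    have hs : (i.val + (2*n+1) - j.val) % (2*n+1) + (j.val + (2*n+1) - i.val) % (2*n+1)
        = 2*n+1 := by
      rcases Nat.lt_or_ge i.val j.val with hlt | hge
      · have e1 : (i.val + (2*n+1) - j.val) % (2*n+1) = i.val + (2*n+1) - j.val :=
          Nat.mod_eq_of_lt (by omega)
        have e2 : (j.val + (2*n+1) - i.val) % (2*n+1) = j.val - i.val := by
          rw [Nat.mod_eq_sub_mod (by omega)]
          rw [Nat.mod_eq_of_lt (by omega)]
          omega
        omega
      · have hgt : j.val < i.val := by omega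
        have e1 : (j.val + (2*n+1) - i.val) % (2*n+1) = j.val + (2*n+1) - i.val :=
          Nat.mod_eq_of_lt (by omega)
        have e2 : (i.val + (2*n+1) - j.val) % (2*n+1) = i.val - j.val := by
          rw [Nat.mod_eq_sub_mod (by omega)]
          rw [Nat.mod_eq_of_lt (by omega)]
          omega
        omega
    have key : Even ((i.val + (2*n+1) - j.val) % (2*n+1)) ↔
        ¬ Even ((j.val + (2*n+1) - i.val) % (2*n+1)) := by
      rw [Nat.even_iff, Nat.even_iff]
      omega
    have hne : ¬ j = i := fun e => h e.symm
    by_cases he : Even ((j.val + (2*n+1) - i.val) % (2*n+1))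
    · simp [h, hne, he, Nat.not_even_iff_odd.mp (fun hev => (key.mp hev) he)]
    · simp [h, hne, he, key.mpr he]

lemma ones_mul_Mmat (n : ℕ) :
    onesMat (2*n+1) * Mmat (2*n+1) = (n : ℝ) • onesMat (2*n+1) := by
  ext i j
  simp [onesMat, Matrix.mul_apply, Mmat_colsum n j]

lemma ones_mul_ones (n : ℕ) :
    onesMat (2*n+1) * onesMat (2*n+1) = ((2*n+1 : ℕ) : ℝ) • onesMat (2*n+1) := by
  ext i j
  simp [onesMat, Matrix.mul_apply, Finset.card_univ]

lemma ones_transpose (n : ℕ) : (onesMat (2*n+1))ᵀ = onesMat (2*n+1) := by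
  ext i j; rfl

set_option maxHeartbeats 1000000 in
lemma Hmat_identity (n : ℕ) :
    (Hmat (2 * n + 1))ᵀ * Hmat (2 * n + 1) + Hmat (2 * n + 1) * Hmat (2 * n + 1)
        + Hmat (2 * n + 1) =
      ((n : ℝ) / (2 * n + 1 : ℝ) ^ 2) • ((2 : ℝ) • Mmat (2 * n + 1) - onesMat (2 * n + 1)) := by
  have hN : ((2*n+1 : ℕ) : ℝ) ≠ 0 := by positivity
  have hN' : ((2:ℝ)*n+1) ≠ 0 := by positivity
  have hT := Mmat_transpose n
  have hJM := ones_mul_Mmat n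
  have hJJ := ones_mul_ones n
  have hJT := ones_transpose n
  unfold Hmat
  set M := Mmat (2*n+1)
  set J := onesMat (2*n+1)
  simp only [Hmat, transpose_smul, transpose_add, transpose_sub, hT, hJT, smul_smul]
  push_cast
  simp only [Matrix.smul_mul, Matrix.mul_smul, Matrix.add_mul, Matrix.mul_add, Matrix.sub_mul,
    Matrix.mul_sub, Matrix.one_mul, Matrix.mul_one, hJM, hJJ, smul_smul, smul_add, smul_sub]
  push_cast
  match_scalars
  all_goals (field_simp; try ring)

/-- The matrix identity `HᵀH + HH + H = (n/N²)(2M_N − 1_N)`, and consequently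
`xᵀ(HᵀH + HH + H)x = −(n/N²)‖x‖²` for every `x`. -/
theorem stmt_12 (n : ℕ) (hn : 1 ≤ n) :
    (Hmat (2 * n + 1))ᵀ * Hmat (2 * n + 1) + Hmat (2 * n + 1) * Hmat (2 * n + 1)
        + Hmat (2 * n + 1) =
      ((n : ℝ) / (2 * n + 1 : ℝ) ^ 2) • ((2 : ℝ) • Mmat (2 * n + 1) - onesMat (2 * n + 1)) ∧
    ∀ x : Fin (2 * n + 1) → ℝ,
      dotProduct x
        (((Hmat (2 * n + 1))ᵀ * Hmat (2 * n + 1) + Hmat (2 * n + 1) * Hmat (2 * n + 1)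
          + Hmat (2 * n + 1)).mulVec x) =
        -((n : ℝ) / (2 * n + 1 : ℝ) ^ 2) * ∑ i, x i ^ 2 := by
  have hid := Hmat_identity n
  refine ⟨hid, fun x => ?_⟩
  rw [hid]
  have hT := Mmat_transpose n
  set M := Mmat (2*n+1)
  set J := onesMat (2*n+1)
  have h2 : (2:ℝ) • M - J = M - Mᵀ - 1 := by
    rw [hT]; module
  rw [h2]
  rw [Matrix.smul_mulVec, dotProduct_smul]
  have hskew : dotProduct x ((M - Mᵀ - 1).mulVec x) = -∑ i, x i ^ 2 := by
    have e1 : dotProduct x ((Mᵀ).mulVec x) = dotProduct x (M.mulVec x) := by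
      rw [Matrix.mulVec_transpose, dotProduct_comm, ← dotProduct_mulVec]
    simp only [Matrix.sub_mulVec, dotProduct_sub, e1, Matrix.one_mulVec]
    simp [dotProduct, ← pow_two]
  rw [hskew]
  simp [smul_eq_mul]
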